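/- Let G be a finite group and H a subgroup of G. Then there exists a set T ⊆ G that is simultaneously a left transversal and a right transversal for H in G. -/

import Mathlib

open Finset

theorem exists_left_right_transversal_of_finite {G : Type*} [Group G] [Finite G]
    (H : Subgroup G) :
    ∃ T : Set G,
      (∀ g : G, ∃! t : G, t ∈ T ∧ t⁻¹ * g ∈ H) ∧
      (∀ g : G, ∃! t : G, t ∈ T ∧ g * t⁻¹ ∈ H) := by
  classical
  cases nonempty_fintype G
  set ι := G ⧸ H
  set ρ := Quotient (QuotientGroup.rightRel H)
  let rmk : G → ρ := Quotient.mk''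
  have rmk_eq : ∀ a b : G, rmk a = rmk b ↔ b * a⁻¹ ∈ H := by
    intro a b
    rw [Quotient.eq'']
    exact QuotientGroup.rightRel_apply
  have lmk_eq : ∀ a b : G, (↑a : ι) = ↑b ↔ a⁻¹ * b ∈ H := fun a b =>
    ⟨fun h => (QuotientGroup.eq ..).mp h, fun h => (QuotientGroup.eq ..).mpr h⟩
  let L : ι → Finset G := fun i => univ.filter (fun g => (↑g : ι) = i)
  let R : ρ → Finset G := fun j => univ.filter (fun g => rmk g = j)
  have hLcard : ∀ i : ι, (L i).card = Fintype.card H := by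
    intro i
    induction i using QuotientGroup.induction_on with
    | H a =>
      rw [← Fintype.card_subtype]
      refine Fintype.card_congr ⟨fun g => ⟨a⁻¹ * g.1, ?_⟩, fun h => ⟨a * h.1, ?_⟩, ?_, ?_⟩
      · have := (lmk_eq g.1 a).mp g.2
        simpa using (inv_mem this : (g.1⁻¹ * a)⁻¹ ∈ H)
      · refine (lmk_eq (a * h.1) a).mpr ?_
        simpa using (inv_mem h.2 : (h.1 : G)⁻¹ ∈ H)
      · intro g; ext; simp
      · intro h; ext; simp
  have hRcard : ∀ j : ρ, (R j).card = Fintype.card H := by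
    intro j
    induction j using Quotient.inductionOn with
    | h a =>
      rw [← Fintype.card_subtype]
      refine Fintype.card_congr ⟨fun g => ⟨g.1 * a⁻¹, ?_⟩, fun h => ⟨h.1 * a, ?_⟩, ?_, ?_⟩
      · have := (rmk_eq g.1 a).mp g.2
        simpa using (inv_mem this : (a * g.1⁻¹)⁻¹ ∈ H)
      · show rmk (h.1 * a) = rmk a
        exact (rmk_eq (h.1 * a) a).mpr (by simp)
      · intro g; ext; simp
      · intro h; ext; simp
  let t : ι → Finset ρ := fun i => (L i).image rmk
  -- Hall condition
  have hall : ∀ A : Finset ι, A.card ≤ (A.biUnion t).card := by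
    intro A
    have hpos : 0 < Fintype.card H := Fintype.card_pos
    have hsub : A.biUnion L ⊆ (A.biUnion t).biUnion R := by
      intro g hg
      rw [mem_biUnion] at hg ⊢
      obtain ⟨i, hi, hgi⟩ := hg
      refine ⟨rmk g, ?_, by simp [R]⟩
      rw [mem_biUnion]
      exact ⟨i, hi, mem_image_of_mem _ hgi⟩
    have h1 : (A.biUnion L).card = A.card * Fintype.card H := by
      rw [card_biUnion, Finset.sum_congr rfl fun i _ => hLcard i, Finset.sum_const,
        smul_eq_mul]
      intro i _ j _ hij
      simp only [Finset.disjoint_left, L, mem_filter]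
      rintro g ⟨-, rfl⟩ ⟨-, h2⟩
      exact hij h2
    have h2 : ((A.biUnion t).biUnion R).card ≤ (A.biUnion t).card * Fintype.card H :=
      card_biUnion_le_card_mul _ _ _ fun j _ => (hRcard j).le
    have := (h1 ▸ Finset.card_le_card hsub).trans h2
    exact Nat.le_of_mul_le_mul_right this hpos
  obtain ⟨f, hfinj, hft⟩ := (Finset.all_card_le_biUnion_card_iff_exists_injective t).mp hall
  have hfbij : Function.Bijective f :=
    (Fintype.bijective_iff_injective_and_card f).mpr
      ⟨hfinj, (Fintype.card_congr (QuotientGroup.quotientRightRelEquivQuotientLeftRel H)).symm⟩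
  -- choose representatives
  have hx : ∀ i : ι, ∃ g : G, (↑g : ι) = i ∧ rmk g = f i := by
    intro i
    have := hft i
    rw [mem_image] at this
    obtain ⟨g, hg, hgf⟩ := this
    exact ⟨g, (mem_filter.mp hg).2, hgf⟩
  choose x hx1 hx2 using hx
  refine ⟨Set.range x, fun g => ?_, fun g => ?_⟩
  · refine ⟨x (↑g), ⟨⟨_, rfl⟩, (lmk_eq _ g).mp (hx1 _)⟩, ?_⟩
    rintro s ⟨⟨i, rfl⟩, hs⟩
    have : (↑(x i) : ι) = ↑g := (lmk_eq _ g).mpr hs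
    rw [hx1 i] at this
    rw [this]
  · obtain ⟨i, hi⟩ := hfbij.surjective (rmk g)
    refine ⟨x i, ⟨⟨_, rfl⟩, ?_⟩, ?_⟩
    · exact (rmk_eq (x i) g).mp (by rw [hx2, hi])
    · rintro s ⟨⟨j, rfl⟩, hs⟩
      have : rmk (x j) = rmk g := (rmk_eq _ _).mpr hs
      rw [hx2 j] at this
      rw [hfinj (this.trans hi.symm)]
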